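/- Let C = (c_{i,j}) and D = (d_{i,j}) be n×n matrices of nonnegative integers with equal row sums and equal column sums, and suppose C* ≥ D* in the componentwise order. Then in the polynomial ring ℤ[x_{1,1},…,x_{n,n}], the difference ∏_{i,j} x_{i,j}^{c_{i,j}} − ∏_{i,j} x_{i,j}^{d_{i,j}} can be written as a finite sum of terms of the form (x_{i,j}·x_{i',j'} − x_{i,j'}·x_{i',j})·μ, where i < i', j < j', and μ is a monomial (a finite product of variables x_{a,b}). -/

import Mathlib

open Matrix BigOperators MvPolynomial Finset

/-- `cstar C i j = ∑_{a ≤ i, b ≤ j} C a b`. -/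
def cstar {n : ℕ} (C : Matrix (Fin n) (Fin n) ℕ) (i j : Fin n) : ℕ :=
  ∑ a ∈ Finset.Iic i, ∑ b ∈ Finset.Iic j, C a b

namespace S17
variable {n : ℕ}

def ext (A : Matrix (Fin n) (Fin n) ℕ) (i j : ℕ) : ℕ :=
  if h : i < n ∧ j < n then A ⟨i, h.1⟩ ⟨j, h.2⟩ else 0

lemma ext_eq_zero_left (A : Matrix (Fin n) (Fin n) ℕ) {i : ℕ} (j : ℕ) (h : n ≤ i) :
    ext A i j = 0 := by
  unfold ext; rw [dif_neg]; omega

lemma ext_eq_zero_right (A : Matrix (Fin n) (Fin n) ℕ) (i : ℕ) {j : ℕ} (h : n ≤ j) :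
    ext A i j = 0 := by
  unfold ext; rw [dif_neg]; omega

lemma ext_pos_lt {A : Matrix (Fin n) (Fin n) ℕ} {i j : ℕ} (h : ext A i j ≠ 0) :
    i < n ∧ j < n := by
  by_contra hc
  unfold ext at h; rw [dif_neg] at h; · exact h rfl
  · omega

def pre (A : Matrix (Fin n) (Fin n) ℕ) (i j : ℕ) : ℤ :=
  ∑ a ∈ range i, ∑ b ∈ range j, (ext A a b : ℤ)

lemma pre_zero_left (A : Matrix (Fin n) (Fin n) ℕ) (j : ℕ) : pre A 0 j = 0 := by
  simp [pre]

lemma pre_zero_right (A : Matrix (Fin n) (Fin n) ℕ) (i : ℕ) : pre A i 0 = 0 := by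
  simp [pre]

lemma pre_succ_left (A : Matrix (Fin n) (Fin n) ℕ) (i j : ℕ) :
    pre A (i+1) j = pre A i j + ∑ b ∈ range j, (ext A i b : ℤ) := by
  simp [pre, Finset.sum_range_succ]

lemma pre_succ_right (A : Matrix (Fin n) (Fin n) ℕ) (i j : ℕ) :
    pre A i (j+1) = pre A i j + ∑ a ∈ range i, (ext A a j : ℤ) := by
  simp [pre, Finset.sum_range_succ, Finset.sum_add_distrib]

lemma pre_sd (A : Matrix (Fin n) (Fin n) ℕ) (i j : ℕ) :
    pre A (i+1) (j+1) - pre A i (j+1) - pre A (i+1) j + pre A i j = (ext A i j : ℤ) := by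
  rw [pre_succ_right, pre_succ_right, pre_succ_left, Finset.sum_range_succ]
  ring

lemma pre_stab_left (A : Matrix (Fin n) (Fin n) ℕ) {i : ℕ} (j : ℕ) (h : n ≤ i) :
    pre A i j = pre A n j := by
  unfold pre
  rw [← Finset.sum_subset (Finset.range_subset_range.mpr h)]
  intro a _ ha
  have : n ≤ a := by simp at ha; omega
  simp [ext_eq_zero_left A _ this]

lemma pre_stab_right (A : Matrix (Fin n) (Fin n) ℕ) (i : ℕ) {j : ℕ} (h : n ≤ j) :
    pre A i j = pre A i n := by
  unfold pre
  refine Finset.sum_congr rfl fun a _ => ?_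
  rw [← Finset.sum_subset (Finset.range_subset_range.mpr h)]
  intro b _ hb
  have : n ≤ b := by simp at hb; omega
  simp [ext_eq_zero_right A _ this]

lemma pre_comm (A : Matrix (Fin n) (Fin n) ℕ) (i j : ℕ) :
    pre A i j = ∑ b ∈ range j, ∑ a ∈ range i, (ext A a b : ℤ) := Finset.sum_comm



-- sum over Iic vs range
lemma sum_Iic_val {M : Type*} [AddCommMonoid M] (i : Fin n) (g : ℕ → M) :
    ∑ a ∈ Finset.Iic i, g a.val = ∑ a ∈ range (i.val+1), g a := by
  refine Finset.sum_nbij' (fun a => a.val) (fun k => if hk : k < n then ⟨k, hk⟩ else i) ?_ ?_ ?_ ?_ ?_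
  · intro a ha; simp at ha ⊢; omega
  · intro k hk; simp at hk ⊢
    have hkn : k < n := lt_of_le_of_lt hk i.isLt
    rw [dif_pos hkn]; exact Fin.mk_le_of_le_val (by omega)
  · intro a ha; simp at ha
    have : a.val < n := a.isLt
    simp [this]
  · intro k hk; simp at hk
    have hkn : k < n := lt_of_le_of_lt hk i.isLt
    simp [hkn]
  · intro a _; rfl

lemma cstar_eq_pre (A : Matrix (Fin n) (Fin n) ℕ) (i j : Fin n) :
    (cstar A i j : ℤ) = pre A (i.val+1) (j.val+1) := by
  unfold cstar pre
  push_cast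
  rw [← sum_Iic_val i (fun a => ∑ b ∈ range (j.val+1), (ext A a b : ℤ))]
  refine Finset.sum_congr rfl fun a _ => ?_
  rw [← sum_Iic_val j (fun b => (ext A a.val b : ℤ))]
  refine Finset.sum_congr rfl fun b _ => ?_
  have : ext A a.val b.val = A a b := by
    unfold ext; rw [dif_pos ⟨a.isLt, b.isLt⟩]
  rw [this]


def fZ (C D : Matrix (Fin n) (Fin n) ℕ) (i j : ℕ) : ℤ := pre C i j - pre D i j

section Margins
variable (C D : Matrix (Fin n) (Fin n) ℕ)
  (hrow : ∀ i, ∑ b ∈ range n, ext C i b = ∑ b ∈ range n, ext D i b)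
  (hcol : ∀ b, ∑ i ∈ range n, ext C i b = ∑ i ∈ range n, ext D i b)

include hrow in
lemma fZ_col_ge {j : ℕ} (i : ℕ) (h : n ≤ j) : fZ C D i j = 0 := by
  unfold fZ
  rw [pre_stab_right C i h, pre_stab_right D i h, sub_eq_zero]
  unfold pre
  refine Finset.sum_congr rfl fun a _ => ?_
  exact_mod_cast congrArg (Nat.cast : ℕ → ℤ) (hrow a)

include hcol in
lemma fZ_row_ge {i : ℕ} (j : ℕ) (h : n ≤ i) : fZ C D i j = 0 := by
  unfold fZ
  rw [pre_stab_left C j h, pre_stab_left D j h, sub_eq_zero, pre_comm, pre_comm]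
  refine Finset.sum_congr rfl fun b _ => ?_
  exact_mod_cast congrArg (Nat.cast : ℕ → ℤ) (hcol b)

include hrow hcol in
lemma fZ_nonneg (hgrid : ∀ i j, i ≤ n → j ≤ n → 0 ≤ fZ C D i j) :
    ∀ i j, 0 ≤ fZ C D i j := by
  intro i j
  rcases le_or_gt i n with hi | hi
  · rcases le_or_gt j n with hj | hj
    · exact hgrid i j hi hj
    · rw [fZ_col_ge C D hrow i hj.le]
  · rw [fZ_row_ge C D hcol j hi.le]

lemma fZ_sd (i j : ℕ) :
    (ext C i j : ℤ) - (ext D i j : ℤ) =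
      fZ C D (i+1) (j+1) - fZ C D i (j+1) - fZ C D (i+1) j + fZ C D i j := by
  have h1 := pre_sd C i j
  have h2 := pre_sd D i j
  unfold fZ; linarith

lemma fZ_zero_left (j : ℕ) : fZ C D 0 j = 0 := by
  simp [fZ, pre_zero_left]

lemma fZ_zero_right (i : ℕ) : fZ C D i 0 = 0 := by
  simp [fZ, pre_zero_right]

end Margins

section Swap
variable (C D : Matrix (Fin n) (Fin n) ℕ)

lemma swap
    (hrow : ∀ i, ∑ b ∈ range n, ext C i b = ∑ b ∈ range n, ext D i b)
    (hcol : ∀ b, ∑ i ∈ range n, ext C i b = ∑ i ∈ range n, ext D i b)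
    (hf : ∀ i j, 0 ≤ fZ C D i j)
    (hne : ∃ i j, 0 < fZ C D i j) :
    ∃ r₁ r₂ s₁ s₂ : ℕ, r₁ < r₂ ∧ r₂ < n ∧ s₁ < s₂ ∧ s₂ < n ∧
      (∀ i j, r₁ < i → i ≤ r₂ → s₁ < j → j ≤ s₂ → 1 ≤ fZ C D i j) ∧
      ((1 ≤ ext D r₁ s₂ ∧ 1 ≤ ext D r₂ s₁) ∨ (1 ≤ ext C r₁ s₁ ∧ 1 ≤ ext C r₂ s₂)) := by
  classical
  set f : ℕ → ℕ → ℤ := fZ C D with hfdef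
  have hcz : ∀ i j, n ≤ i → f i j = 0 := fun i j h => fZ_row_ge C D hcol j h
  have hrz : ∀ i j, n ≤ j → f i j = 0 := fun i j h => fZ_col_ge C D hrow i h
  have hzl : ∀ j, f 0 j = 0 := fZ_zero_left C D
  have hzr : ∀ i, f i 0 = 0 := fZ_zero_right C D
  -- β₀ : least column with a positive value
  have hex : ∃ j, ∃ i, 0 < f i j := by obtain ⟨i, j, h⟩ := hne; exact ⟨j, i, h⟩
  set β₀ := Nat.find hex with hβ₀def
  obtain ⟨iw, hiw⟩ := Nat.find_spec hex
  rw [← hβ₀def] at hiw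
  have hcolzero : ∀ j, j < β₀ → ∀ i, f i j = 0 := by
    intro j hj i
    have h1 := Nat.find_min hex hj
    push_neg at h1
    exact le_antisymm (h1 i) (hf i j)
  have hb0pos : 0 < β₀ := by
    rcases Nat.eq_zero_or_pos β₀ with h | h
    · rw [h] at hiw; rw [hzr] at hiw; omega
    · exact h
  have hb0lt : β₀ < n := by
    by_contra h
    rw [hrz iw β₀ (by omega)] at hiw; omega
  -- α₁ : greatest row with positive value in column β₀
  set α₁ := Nat.findGreatest (fun i => 0 < f i β₀) n with hα₁def
  have hiwn : iw < n := by
    by_contra h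
    rw [hcz iw β₀ (by omega)] at hiw; omega
  have hα₁pos : 0 < f α₁ β₀ := Nat.findGreatest_spec (P := fun i => 0 < f i β₀) (le_of_lt hiwn) hiw
  have hα₁max : ∀ i, α₁ < i → f i β₀ = 0 := by
    intro i hi
    rcases le_or_gt i n with h | h
    · exact le_antisymm (not_lt.mp (Nat.findGreatest_is_greatest hi h)) (hf i β₀)
    · exact hcz i β₀ h.le
  have hα₁lt : α₁ < n := by
    by_contra h
    rw [hcz α₁ β₀ (not_lt.mp h)] at hα₁pos; omega
  -- α₀ : start of the run of positives ending at α₁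
  have hex2 : ∃ m, ∀ k, m ≤ k → k ≤ α₁ → 0 < f k β₀ := by
    refine ⟨α₁, fun k h1 h2 => ?_⟩
    have : k = α₁ := le_antisymm h2 h1
    rw [this]; exact hα₁pos
  set α₀ := Nat.find hex2 with hα₀def
  have hrun : ∀ k, α₀ ≤ k → k ≤ α₁ → 0 < f k β₀ := Nat.find_spec hex2
  have hα₀le : α₀ ≤ α₁ := Nat.find_min' hex2 (fun k h1 h2 => by
    have : k = α₁ := le_antisymm h2 h1
    rw [this]; exact hα₁pos)
  have hα₀pos : 0 < α₀ := by
    rcases Nat.eq_zero_or_pos α₀ with h | h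
    · have := hrun 0 (by omega) (by omega)
      rw [hzl] at this; omega
    · exact h
  obtain ⟨a, ha⟩ : ∃ a, α₀ = a + 1 := ⟨α₀ - 1, by omega⟩
  obtain ⟨b₀, hb₀⟩ : ∃ b₀, β₀ = b₀ + 1 := ⟨β₀ - 1, by omega⟩
  have hprev : f a β₀ = 0 := by
    have h1 := Nat.find_min hex2 (show α₀ - 1 < α₀ by omega)
    push_neg at h1
    obtain ⟨k, hk1, hk2, hk3⟩ := h1
    have hk : k = a := by
      by_contra hne'
      exact absurd hk3 (not_le.mpr (hrun k (by omega) hk2))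
    rw [hk] at hk3
    exact le_antisymm hk3 (hf a β₀)
  -- the two anchors in column b₀
  have hCanchor : 1 ≤ ext C a b₀ := by
    have hsd := fZ_sd C D a b₀
    rw [← hb₀] at hsd
    have e1 : f a β₀ = 0 := hprev
    have e2 : f (a+1) b₀ = 0 := hcolzero b₀ (by omega) _
    have e3 : f a b₀ = 0 := hcolzero b₀ (by omega) _
    have e4 : 0 < f (a+1) β₀ := hrun α₀ le_rfl hα₀le |>.trans_eq (by rw [ha])
    rw [← hfdef] at hsd
    omega
  have hDanchor : 1 ≤ ext D α₁ b₀ := by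
    have hsd := fZ_sd C D α₁ b₀
    rw [← hb₀] at hsd
    have e1 : f (α₁+1) β₀ = 0 := hα₁max _ (by omega)
    have e2 : f (α₁+1) b₀ = 0 := hcolzero b₀ (by omega) _
    have e3 : f α₁ b₀ = 0 := hcolzero b₀ (by omega) _
    have e4 : 0 < f α₁ β₀ := hα₁pos
    rw [← hfdef] at hsd
    omega
  -- the predicate for extending the rectangle to the right
  set Pcol : ℕ → Prop := fun s =>
    (∃ r, a ≤ r ∧ r < α₁ ∧ 1 ≤ ext D r s) ∨ (∃ r, α₀ ≤ r ∧ r ≤ α₁ ∧ 1 ≤ ext C r s)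
    with hPdef
  -- the invariant
  have Inv : ∀ j, β₀ ≤ j → (∀ s, β₀ ≤ s → s < j → ¬ Pcol s) →
      (∀ i, α₀ ≤ i → i ≤ α₁ → f i j = f i β₀ + (f α₀ j - f α₀ β₀)) ∧
      f (α₁+1) j ≤ f α₀ j - f α₀ β₀ := by
    intro j hj
    induction j, hj using Nat.le_induction with
    | base =>
      intro _
      refine ⟨fun i _ _ => by ring, ?_⟩
      rw [hα₁max _ (by omega)]
      simp
    | succ j hj ih =>
      intro hs
      have ihP := ih (fun s h1 h2 => hs s h1 (by omega))
      have hnp : ¬ Pcol j := hs j hj (by omega)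
      have hd' : ∀ r, a ≤ r → r < α₁ → ext D r j = 0 := by
        intro r h1 h2
        by_contra hge
        exact hnp (Or.inl ⟨r, h1, h2, by omega⟩)
      have hc' : ∀ r, α₀ ≤ r → r ≤ α₁ → ext C r j = 0 := by
        intro r h1 h2
        by_contra hge
        exact hnp (Or.inr ⟨r, h1, h2, by omega⟩)
      have hK : ∀ i, α₀ ≤ i → f i (j+1) - f i j = f α₀ (j+1) - f α₀ j ∨ ¬ (i ≤ α₁) := by
        intro i h1
        induction i, h1 using Nat.le_induction with
        | base => exact Or.inl rfl
        | succ i hi ihi =>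
          by_cases h2 : i + 1 ≤ α₁
          · left
            rcases ihi with hK' | hno
            · have hsd := fZ_sd C D i j
              rw [hc' i hi (by omega), hd' i (by omega) (by omega)] at hsd
              rw [← hfdef] at hsd
              push_cast at hsd
              linarith
            · omega
          · exact Or.inr h2
      have hK' : ∀ i, α₀ ≤ i → i ≤ α₁ → f i (j+1) - f i j = f α₀ (j+1) - f α₀ j := by
        intro i h1 h2
        rcases hK i h1 with h | h
        · exact h
        · omega
      constructor
      · intro i h1 h2
        have e1 := hK' i h1 h2
        have e2 := ihP.1 i h1 h2
        linarith
      · have hsd := fZ_sd C D α₁ j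
        rw [hc' α₁ hα₀le le_rfl] at hsd
        rw [← hfdef] at hsd
        have e1 : (0:ℤ) ≤ ext D α₁ j := by positivity
        have e2 := hK' α₁ hα₀le le_rfl
        have e3 := ihP.2
        push_cast at hsd
        linarith
  -- existence of a column where Pcol holds
  have hexP : ∃ s, β₀ ≤ s ∧ Pcol s := by
    by_contra h
    push_neg at h
    have I := Inv n hb0lt.le (fun s h1 _ => h s h1)
    have e1 : f (α₁+1) n = 0 := hrz _ _ le_rfl
    have e2 : f α₀ n = 0 := hrz _ _ le_rfl
    have e3 : 0 < f α₀ β₀ := hrun α₀ le_rfl hα₀le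
    have := I.2
    omega
  set β := Nat.find hexP with hβdef
  obtain ⟨hββ₀, hP⟩ := Nat.find_spec hexP
  rw [← hβdef] at hββ₀ hP
  have hβmin : ∀ s, β₀ ≤ s → s < β → ¬ Pcol s := by
    intro s h1 h2 hp
    exact Nat.find_min hexP h2 ⟨h1, hp⟩
  have hrect : ∀ i jj, α₀ ≤ i → i ≤ α₁ → β₀ ≤ jj → jj ≤ β → 1 ≤ f i jj := by
    intro i jj h1 h2 h3 h4
    have I := Inv jj h3 (fun s hs1 hs2 => hβmin s hs1 (by omega))
    have hS : 0 ≤ f α₀ jj - f α₀ β₀ := le_trans (hf (α₁+1) jj) I.2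
    have e1 := I.1 i h1 h2
    have e2 : 0 < f i β₀ := hrun i h1 h2
    omega
  have hP' : (∃ r, a ≤ r ∧ r < α₁ ∧ 1 ≤ ext D r β) ∨
      (∃ r, α₀ ≤ r ∧ r ≤ α₁ ∧ 1 ≤ ext C r β) := hP
  rcases hP' with ⟨r, hr1, hr2, hrd⟩ | ⟨r, hr1, hr2, hrc⟩
  · -- raise D : antidiagonal entries of D at (r, β) and (α₁, b₀)
    have hβn : β < n := (ext_pos_lt (by omega : ext D r β ≠ 0)).2
    refine ⟨r, α₁, b₀, β, hr2, hα₁lt, by omega, hβn, ?_, Or.inl ⟨hrd, hDanchor⟩⟩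
    intro i j h1' h2' h3' h4'
    exact hrect i j (by omega) h2' (by omega) h4'
  · -- lower C : diagonal entries of C at (a, b₀) and (r, β)
    have hβn : β < n := (ext_pos_lt (by omega : ext C r β ≠ 0)).2
    refine ⟨a, r, b₀, β, by omega, by omega, by omega, hβn, ?_, Or.inr ⟨hCanchor, hrc⟩⟩
    intro i j h1' h2' h3' h4'
    exact hrect i j (by omega) (by omega) (by omega) h4'

end Swap

section Poly

noncomputable def PM (A : Matrix (Fin n) (Fin n) ℕ) : MvPolynomial (Fin n × Fin n) ℤ :=
  ∏ p : Fin n × Fin n, X p ^ A p.1 p.2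

lemma PM_eq_monomial (A : Matrix (Fin n) (Fin n) ℕ) :
    PM A = monomial (Finsupp.equivFunOnFinite.symm fun p : Fin n × Fin n => A p.1 p.2) 1 := by
  rw [MvPolynomial.monomial_eq, Finsupp.prod_fintype _ _ (fun i => pow_zero _)]
  simp [PM]

lemma PM_bump (B : Matrix (Fin n) (Fin n) ℕ) (q : Fin n × Fin n) :
    PM (fun i j => B i j + if (i, j) = q then 1 else 0) = X q * PM B := by
  unfold PM
  have h : ∀ p : Fin n × Fin n,
      X (R := ℤ) p ^ (B p.1 p.2 + if (p.1, p.2) = q then 1 else 0) =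
        (if p = q then X p else 1) * X p ^ B p.1 p.2 := by
    intro p
    rw [pow_add]
    rcases eq_or_ne p q with hp | hp
    · simp [hp, mul_comm]
    · have : (p.1, p.2) ≠ q := by rwa [Prod.mk.eta]
      simp [hp, this]
  calc (∏ p : Fin n × Fin n, X (R := ℤ) p ^ (B p.1 p.2 + if (p.1, p.2) = q then 1 else 0))
      = ∏ p : Fin n × Fin n, (if p = q then X p else 1) * X p ^ B p.1 p.2 :=
        Finset.prod_congr rfl fun p _ => h p
    _ = (∏ p : Fin n × Fin n, (if p = q then X (R := ℤ) p else 1)) *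
          ∏ p : Fin n × Fin n, X p ^ B p.1 p.2 := Finset.prod_mul_distrib
    _ = X q * ∏ p : Fin n × Fin n, X p ^ B p.1 p.2 := by
        rw [Finset.prod_ite_eq' Finset.univ q (fun p => X (R := ℤ) p)]
        simp

end Poly

section Move

lemma ext_apply (A : Matrix (Fin n) (Fin n) ℕ) (i j : Fin n) : ext A i.val j.val = A i j := by
  unfold ext
  rw [dif_pos ⟨i.isLt, j.isLt⟩]

lemma delta1r (P : Prop) [Decidable P] (s N : ℕ) :
    ∑ b ∈ range N, (if P ∧ b = s then (1:ℤ) else 0) = if P ∧ s < N then 1 else 0 := by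
  by_cases hP : P
  · simp only [hP, true_and]
    rw [Finset.sum_ite_eq' (range N) s (fun _ => (1:ℤ))]
    simp [Finset.mem_range]
  · simp [hP]

lemma delta1l (P : Prop) [Decidable P] (r N : ℕ) :
    ∑ a ∈ range N, (if a = r ∧ P then (1:ℤ) else 0) = if r < N ∧ P then 1 else 0 := by
  by_cases hP : P
  · simp only [hP, and_true]
    rw [Finset.sum_ite_eq' (range N) r (fun _ => (1:ℤ))]
    simp [Finset.mem_range]
  · simp [hP]

def bumpFun (A : Matrix (Fin n) (Fin n) ℕ) (r₁ r₂ s₁ s₂ : ℕ) : ℕ → ℕ → ℕ := fun i j =>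
  if i = r₁ ∧ j = s₁ then ext A i j + 1
  else if i = r₂ ∧ j = s₂ then ext A i j + 1
  else if i = r₁ ∧ j = s₂ then ext A i j - 1
  else if i = r₂ ∧ j = s₁ then ext A i j - 1
  else ext A i j

def bumpMat (A : Matrix (Fin n) (Fin n) ℕ) (r₁ r₂ s₁ s₂ : ℕ) : Matrix (Fin n) (Fin n) ℕ :=
  fun i j => bumpFun A r₁ r₂ s₁ s₂ i.val j.val

lemma PM_bump' (B : Matrix (Fin n) (Fin n) ℕ) {r s : ℕ} (hr : r < n) (hs : s < n) :
    PM (fun i j => B i j + if i.val = r ∧ j.val = s then 1 else 0) =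
      X (⟨r, hr⟩, ⟨s, hs⟩) * PM B := by
  rw [← PM_bump B (⟨r, hr⟩, ⟨s, hs⟩)]
  congr 1
  funext i j
  congr 1
  simp [Prod.ext_iff, Fin.ext_iff]

variable {A : Matrix (Fin n) (Fin n) ℕ} {r₁ r₂ s₁ s₂ : ℕ}

lemma move (h12 : r₁ < r₂) (h2n : r₂ < n) (hs : s₁ ≠ s₂) (hs1n : s₁ < n) (hs2n : s₂ < n)
    (ha1 : 1 ≤ ext A r₁ s₂) (ha2 : 1 ≤ ext A r₂ s₁) :
    (∀ i j, pre (bumpMat A r₁ r₂ s₁ s₂) i j = pre A i j +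
        ((if r₁ < i ∧ s₁ < j then (1:ℤ) else 0) + (if r₂ < i ∧ s₂ < j then 1 else 0)
          - (if r₁ < i ∧ s₂ < j then 1 else 0) - (if r₂ < i ∧ s₁ < j then 1 else 0))) ∧
      (∀ i, ∑ b ∈ range n, ext (bumpMat A r₁ r₂ s₁ s₂) i b = ∑ b ∈ range n, ext A i b) ∧
      (∀ b, ∑ i ∈ range n, ext (bumpMat A r₁ r₂ s₁ s₂) i b = ∑ i ∈ range n, ext A i b) ∧
      ∃ e : (Fin n × Fin n) →₀ ℕ,
        PM (bumpMat A r₁ r₂ s₁ s₂) - PM A =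
          (X (⟨r₁, h12.trans h2n⟩, ⟨s₁, hs1n⟩) * X (⟨r₂, h2n⟩, ⟨s₂, hs2n⟩) -
            X (⟨r₁, h12.trans h2n⟩, ⟨s₂, hs2n⟩) * X (⟨r₂, h2n⟩, ⟨s₁, hs1n⟩)) * monomial e 1 := by
  have hextA' : ∀ i j, ext (bumpMat A r₁ r₂ s₁ s₂) i j = bumpFun A r₁ r₂ s₁ s₂ i j := by
    intro i j
    unfold ext bumpMat
    split_ifs with h
    · rfl
    · have hz : ext A i j = 0 := by unfold ext; rw [dif_neg h]
      unfold bumpFun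
      split_ifs <;> omega
  have key : ∀ i j : ℕ, 1 ≤ ext A i j ∨ ¬((i = r₁ ∧ j = s₂) ∨ (i = r₂ ∧ j = s₁)) := by
    intro i j
    by_cases h : (i = r₁ ∧ j = s₂) ∨ (i = r₂ ∧ j = s₁)
    · rcases h with ⟨rfl, rfl⟩ | ⟨rfl, rfl⟩
      · exact Or.inl ha1
      · exact Or.inl ha2
    · exact Or.inr h
  have hrel : ∀ i j : ℕ, (ext (bumpMat A r₁ r₂ s₁ s₂) i j : ℤ) = ext A i j +
      (((if i = r₁ ∧ j = s₁ then (1:ℤ) else 0) + (if i = r₂ ∧ j = s₂ then 1 else 0))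
        - ((if i = r₁ ∧ j = s₂ then 1 else 0) + (if i = r₂ ∧ j = s₁ then 1 else 0))) := by
    intro i j
    rw [hextA']
    have hk := key i j
    unfold bumpFun
    split_ifs <;> omega
  refine ⟨?_, ?_, ?_, ?_⟩
  · -- pre relation
    intro i j
    unfold pre
    calc ∑ a ∈ range i, ∑ b ∈ range j, (ext (bumpMat A r₁ r₂ s₁ s₂) a b : ℤ)
        = ∑ a ∈ range i, ∑ b ∈ range j, ((ext A a b : ℤ) +
            (((if a = r₁ ∧ b = s₁ then (1:ℤ) else 0) + (if a = r₂ ∧ b = s₂ then 1 else 0))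
              - ((if a = r₁ ∧ b = s₂ then 1 else 0) + (if a = r₂ ∧ b = s₁ then 1 else 0)))) :=
          Finset.sum_congr rfl fun a _ => Finset.sum_congr rfl fun b _ => hrel a b
      _ = _ := by
        simp only [Finset.sum_add_distrib, Finset.sum_sub_distrib]
        simp only [delta1r, delta1l]
        ring
  · -- row margins
    intro i
    have h0 : (∑ b ∈ range n, (ext (bumpMat A r₁ r₂ s₁ s₂) i b : ℤ)) =
        ∑ b ∈ range n, (ext A i b : ℤ) := by
      rw [Finset.sum_congr rfl fun b _ => hrel i b]
      simp only [Finset.sum_add_distrib, Finset.sum_sub_distrib, delta1r]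
      split_ifs <;> omega
    exact_mod_cast h0
  · -- column margins
    intro b
    have h0 : (∑ i ∈ range n, (ext (bumpMat A r₁ r₂ s₁ s₂) i b : ℤ)) =
        ∑ i ∈ range n, (ext A i b : ℤ) := by
      rw [Finset.sum_congr rfl fun i _ => hrel i b]
      simp only [Finset.sum_add_distrib, Finset.sum_sub_distrib, delta1l]
      split_ifs <;> omega
    exact_mod_cast h0
  · -- polynomial identity
    set A₀ : Matrix (Fin n) (Fin n) ℕ := fun i j =>
      if i.val = r₁ ∧ j.val = s₂ then A i j - 1
      else if i.val = r₂ ∧ j.val = s₁ then A i j - 1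
      else A i j with hA₀
    have ha1' : ∀ i j : Fin n, i.val = r₁ → j.val = s₂ → 1 ≤ A i j := by
      intro i j h1 h2
      have e := ext_apply A i j
      rw [h1, h2] at e
      omega
    have ha2' : ∀ i j : Fin n, i.val = r₂ → j.val = s₁ → 1 ≤ A i j := by
      intro i j h1 h2
      have e := ext_apply A i j
      rw [h1, h2] at e
      omega
    have hA : A = fun i j =>
        ((fun i j => A₀ i j + if i.val = r₂ ∧ j.val = s₁ then 1 else 0) i j
          + if i.val = r₁ ∧ j.val = s₂ then 1 else 0) := by
      funext i j
      simp only [hA₀]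
      by_cases c1 : i.val = r₁ ∧ j.val = s₂ <;> by_cases c2 : i.val = r₂ ∧ j.val = s₁
      · omega
      · have := ha1' i j c1.1 c1.2
        simp only [if_pos c1, if_neg c2]
        omega
      · have := ha2' i j c2.1 c2.2
        simp only [if_neg c1, if_pos c2]
        omega
      · simp only [if_neg c1, if_neg c2]
        omega
    have hA' : bumpMat A r₁ r₂ s₁ s₂ = fun i j =>
        ((fun i j => A₀ i j + if i.val = r₂ ∧ j.val = s₂ then 1 else 0) i j
          + if i.val = r₁ ∧ j.val = s₁ then 1 else 0) := by
      funext i j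
      have e := ext_apply A i j
      simp only [hA₀]
      unfold bumpMat bumpFun
      by_cases c1 : i.val = r₁ <;> by_cases c2 : i.val = r₂ <;>
        by_cases c3 : j.val = s₁ <;> by_cases c4 : j.val = s₂ <;>
          split_ifs <;> omega
    refine ⟨Finsupp.equivFunOnFinite.symm fun p : Fin n × Fin n => A₀ p.1 p.2, ?_⟩
    rw [hA', hA]
    erw [PM_bump' _ (h12.trans h2n) hs1n, PM_bump' _ h2n hs2n]
    erw [PM_bump' _ (h12.trans h2n) hs2n, PM_bump' _ h2n hs1n]
    rw [PM_eq_monomial A₀]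
    ring

end Move

section Main

def Sgen (n : ℕ) : Set (MvPolynomial (Fin n × Fin n) ℤ) :=
  {q | ∃ (i i' j j' : Fin n) (e : (Fin n × Fin n) →₀ ℕ), i < i' ∧ j < j' ∧
    q = (X (i,j) * X (i',j') - X (i,j') * X (i',j)) * monomial e 1}

lemma rect_sum_ge_one {r₁ r₂ s₁ s₂ : ℕ} (h12 : r₁ < r₂) (h2n : r₂ < n)
    (hs12 : s₁ < s₂) (hsn : s₂ < n) :
    1 ≤ ∑ i ∈ range (n+1), ∑ j ∈ range (n+1),
      (if r₁ < i ∧ i ≤ r₂ ∧ s₁ < j ∧ j ≤ s₂ then (1:ℤ) else 0) := by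
  have hnn : ∀ i j, (0:ℤ) ≤ if r₁ < i ∧ i ≤ r₂ ∧ s₁ < j ∧ j ≤ s₂ then (1:ℤ) else 0 := by
    intro i j; split_ifs <;> norm_num
  have h1 : 1 ≤ ∑ j ∈ range (n+1),
      (if r₁ < r₁+1 ∧ r₁+1 ≤ r₂ ∧ s₁ < j ∧ j ≤ s₂ then (1:ℤ) else 0) := by
    have := Finset.single_le_sum (f := fun j =>
      (if r₁ < r₁+1 ∧ r₁+1 ≤ r₂ ∧ s₁ < j ∧ j ≤ s₂ then (1:ℤ) else 0))
      (fun j _ => hnn _ j) (Finset.mem_range.mpr (show s₁+1 < n+1 by omega))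
    beta_reduce at this
    rw [if_pos (show r₁ < r₁+1 ∧ r₁+1 ≤ r₂ ∧ s₁ < s₁+1 ∧ s₁+1 ≤ s₂ by omega)] at this
    exact this
  calc (1:ℤ) ≤ ∑ j ∈ range (n+1),
        (if r₁ < r₁+1 ∧ r₁+1 ≤ r₂ ∧ s₁ < j ∧ j ≤ s₂ then (1:ℤ) else 0) := h1
    _ ≤ _ := Finset.single_le_sum (f := fun i => ∑ j ∈ range (n+1),
        (if r₁ < i ∧ i ≤ r₂ ∧ s₁ < j ∧ j ≤ s₂ then (1:ℤ) else 0))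
        (fun i _ => Finset.sum_nonneg fun j _ => hnn i j)
        (Finset.mem_range.mpr (show r₁+1 < n+1 by omega))

lemma main : ∀ (m : ℕ) (C D : Matrix (Fin n) (Fin n) ℕ),
    (∀ i, ∑ b ∈ range n, ext C i b = ∑ b ∈ range n, ext D i b) →
    (∀ b, ∑ i ∈ range n, ext C i b = ∑ i ∈ range n, ext D i b) →
    (∀ i j, 0 ≤ fZ C D i j) →
    (∑ i ∈ range (n+1), ∑ j ∈ range (n+1), fZ C D i j).toNat ≤ m →
    PM C - PM D ∈ AddSubmonoid.closure (Sgen n) := by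
  intro m
  induction m with
  | zero =>
    intro C D hrow hcol hf hm
    by_cases hne : ∃ i j, 0 < fZ C D i j
    · exfalso
      obtain ⟨i₀, j₀, h₀⟩ := hne
      have hi₀ : i₀ < n := by
        by_contra h
        rw [fZ_row_ge C D hcol j₀ (by omega)] at h₀; omega
      have hj₀ : j₀ < n := by
        by_contra h
        rw [fZ_col_ge C D hrow i₀ (by omega)] at h₀; omega
      have h3 : 1 ≤ ∑ j ∈ range (n+1), fZ C D i₀ j :=
        le_trans h₀ (Finset.single_le_sum (f := fun j => fZ C D i₀ j)
          (fun j _ => hf i₀ j) (Finset.mem_range.mpr (by omega)))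
      have h4 : 1 ≤ ∑ i ∈ range (n+1), ∑ j ∈ range (n+1), fZ C D i j :=
        le_trans h3 (Finset.single_le_sum (f := fun i => ∑ j ∈ range (n+1), fZ C D i j)
          (fun i _ => Finset.sum_nonneg fun j _ => hf i j) (Finset.mem_range.mpr (by omega)))
      have := Int.toNat_le.mp hm
      omega
    · push_neg at hne
      have hz : ∀ i j, fZ C D i j = 0 := fun i j => le_antisymm (hne i j) (hf i j)
      have hpre : ∀ i j, pre C i j = pre D i j := by
        intro i j
        have := hz i j
        unfold fZ at this
        linarith
      have hext : ∀ i j, ext C i j = ext D i j := by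
        intro i j
        have h1 := pre_sd C i j
        have h2 := pre_sd D i j
        have e1 := hpre (i+1) (j+1); have e2 := hpre i (j+1)
        have e3 := hpre (i+1) j; have e4 := hpre i j
        have : (ext C i j : ℤ) = ext D i j := by linarith
        exact_mod_cast this
      have hCD : C = D := by
        funext i j
        have := hext i.val j.val
        rwa [ext_apply, ext_apply] at this
      rw [hCD, sub_self]
      exact zero_mem _
  | succ m ih =>
    intro C D hrow hcol hf hm
    by_cases hne : ∃ i j, 0 < fZ C D i j
    · obtain ⟨r₁, r₂, s₁, s₂, h12, h2n, hs12, hsn, hrect, hanch⟩ :=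
        swap C D hrow hcol hf hne
      rcases hanch with ⟨ha1, ha2⟩ | ⟨ha1, ha2⟩
      · -- raise D
        obtain ⟨hpre, hrowD, hcolD, e, hPM⟩ :=
          move (A := D) h12 h2n (by omega : s₁ ≠ s₂) (by omega) hsn ha1 ha2
        set D' := bumpMat D r₁ r₂ s₁ s₂ with hD'
        have hpre' : ∀ i j, pre D' i j = pre D i j +
            (if r₁ < i ∧ i ≤ r₂ ∧ s₁ < j ∧ j ≤ s₂ then (1:ℤ) else 0) := by
          intro i j
          rw [hpre i j]
          congr 1
          split_ifs <;> omega
        have hfd : ∀ i j, fZ C D' i j = fZ C D i j -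
            (if r₁ < i ∧ i ≤ r₂ ∧ s₁ < j ∧ j ≤ s₂ then (1:ℤ) else 0) := by
          intro i j
          unfold fZ
          rw [hpre' i j]
          ring
        have hf' : ∀ i j, 0 ≤ fZ C D' i j := by
          intro i j
          rw [hfd]
          split_ifs with h
          · have := hrect i j h.1 h.2.1 h.2.2.1 h.2.2.2
            linarith
          · have := hf i j
            linarith
        have hm' : (∑ i ∈ range (n+1), ∑ j ∈ range (n+1), fZ C D' i j).toNat ≤ m := by
          have hs1 : ∑ i ∈ range (n+1), ∑ j ∈ range (n+1), fZ C D' i j =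
              (∑ i ∈ range (n+1), ∑ j ∈ range (n+1), fZ C D i j) -
              ∑ i ∈ range (n+1), ∑ j ∈ range (n+1),
                (if r₁ < i ∧ i ≤ r₂ ∧ s₁ < j ∧ j ≤ s₂ then (1:ℤ) else 0) := by
            rw [← Finset.sum_sub_distrib]
            refine Finset.sum_congr rfl fun i _ => ?_
            rw [← Finset.sum_sub_distrib]
            exact Finset.sum_congr rfl fun j _ => hfd i j
          have hge := rect_sum_ge_one h12 h2n hs12 hsn
          have hnn' : 0 ≤ ∑ i ∈ range (n+1), ∑ j ∈ range (n+1), fZ C D' i j :=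
            Finset.sum_nonneg fun i _ => Finset.sum_nonneg fun j _ => hf' i j
          have hub := Int.toNat_le.mp hm
          rw [Int.toNat_le]
          push_cast at hub ⊢
          omega
        have hrow' : ∀ i, ∑ b ∈ range n, ext C i b = ∑ b ∈ range n, ext D' i b :=
          fun i => (hrow i).trans (hrowD i).symm
        have hcol' : ∀ b, ∑ i ∈ range n, ext C i b = ∑ i ∈ range n, ext D' i b :=
          fun b => (hcol b).trans (hcolD b).symm
        have hgen : PM D' - PM D ∈ Sgen n :=
          ⟨⟨r₁, h12.trans h2n⟩, ⟨r₂, h2n⟩, ⟨s₁, hs12.trans hsn⟩, ⟨s₂, hsn⟩, e,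
            Fin.mk_lt_mk.mpr h12, Fin.mk_lt_mk.mpr hs12, hPM⟩
        have : PM C - PM D = (PM C - PM D') + (PM D' - PM D) := by ring
        rw [this]
        exact add_mem (ih C D' hrow' hcol' hf' hm') (AddSubmonoid.subset_closure hgen)
      · -- lower C
        obtain ⟨hpre, hrowC, hcolC, e, hPM⟩ :=
          move (A := C) h12 h2n (by omega : s₂ ≠ s₁) hsn (by omega) ha1 ha2
        set C' := bumpMat C r₁ r₂ s₂ s₁ with hC'
        have hpre' : ∀ i j, pre C' i j = pre C i j -
            (if r₁ < i ∧ i ≤ r₂ ∧ s₁ < j ∧ j ≤ s₂ then (1:ℤ) else 0) := by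
          intro i j
          rw [hpre i j]
          have : ((if r₁ < i ∧ s₂ < j then (1:ℤ) else 0) + (if r₂ < i ∧ s₁ < j then 1 else 0)
              - (if r₁ < i ∧ s₁ < j then 1 else 0) - (if r₂ < i ∧ s₂ < j then 1 else 0)) =
              -(if r₁ < i ∧ i ≤ r₂ ∧ s₁ < j ∧ j ≤ s₂ then (1:ℤ) else 0) := by
            split_ifs <;> omega
          rw [this]
          ring
        have hfd : ∀ i j, fZ C' D i j = fZ C D i j -
            (if r₁ < i ∧ i ≤ r₂ ∧ s₁ < j ∧ j ≤ s₂ then (1:ℤ) else 0) := by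
          intro i j
          unfold fZ
          rw [hpre' i j]
          ring
        have hf' : ∀ i j, 0 ≤ fZ C' D i j := by
          intro i j
          rw [hfd]
          split_ifs with h
          · have := hrect i j h.1 h.2.1 h.2.2.1 h.2.2.2
            linarith
          · have := hf i j
            linarith
        have hm' : (∑ i ∈ range (n+1), ∑ j ∈ range (n+1), fZ C' D i j).toNat ≤ m := by
          have hs1 : ∑ i ∈ range (n+1), ∑ j ∈ range (n+1), fZ C' D i j =
              (∑ i ∈ range (n+1), ∑ j ∈ range (n+1), fZ C D i j) -
              ∑ i ∈ range (n+1), ∑ j ∈ range (n+1),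
                (if r₁ < i ∧ i ≤ r₂ ∧ s₁ < j ∧ j ≤ s₂ then (1:ℤ) else 0) := by
            rw [← Finset.sum_sub_distrib]
            refine Finset.sum_congr rfl fun i _ => ?_
            rw [← Finset.sum_sub_distrib]
            exact Finset.sum_congr rfl fun j _ => hfd i j
          have hge := rect_sum_ge_one h12 h2n hs12 hsn
          have hnn' : 0 ≤ ∑ i ∈ range (n+1), ∑ j ∈ range (n+1), fZ C' D i j :=
            Finset.sum_nonneg fun i _ => Finset.sum_nonneg fun j _ => hf' i j
          have hub := Int.toNat_le.mp hm
          rw [Int.toNat_le]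
          push_cast at hub ⊢
          omega
        have hrow' : ∀ i, ∑ b ∈ range n, ext C' i b = ∑ b ∈ range n, ext D i b :=
          fun i => (hrowC i).trans (hrow i)
        have hcol' : ∀ b, ∑ i ∈ range n, ext C' i b = ∑ i ∈ range n, ext D i b :=
          fun b => (hcolC b).trans (hcol b)
        have hPM' : PM C - PM C' =
            (X (⟨r₁, h12.trans h2n⟩, ⟨s₁, hs12.trans hsn⟩) * X (⟨r₂, h2n⟩, ⟨s₂, hsn⟩) -
              X (⟨r₁, h12.trans h2n⟩, ⟨s₂, hsn⟩) * X (⟨r₂, h2n⟩, ⟨s₁, hs12.trans hsn⟩)) *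
              monomial e 1 := by
          linear_combination -hPM
        have hgen : PM C - PM C' ∈ Sgen n :=
          ⟨⟨r₁, h12.trans h2n⟩, ⟨r₂, h2n⟩, ⟨s₁, hs12.trans hsn⟩, ⟨s₂, hsn⟩, e,
            Fin.mk_lt_mk.mpr h12, Fin.mk_lt_mk.mpr hs12, hPM'⟩
        have : PM C - PM D = (PM C - PM C') + (PM C' - PM D) := by ring
        rw [this]
        exact add_mem (AddSubmonoid.subset_closure hgen) (ih C' D hrow' hcol' hf' hm')
    · -- no positive entry: C = D (same as base case)
      push_neg at hne
      have hz : ∀ i j, fZ C D i j = 0 := fun i j => le_antisymm (hne i j) (hf i j)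
      have hpre : ∀ i j, pre C i j = pre D i j := by
        intro i j
        have := hz i j
        unfold fZ at this
        linarith
      have hext : ∀ i j, ext C i j = ext D i j := by
        intro i j
        have h1 := pre_sd C i j
        have h2 := pre_sd D i j
        have e1 := hpre (i+1) (j+1); have e2 := hpre i (j+1)
        have e3 := hpre (i+1) j; have e4 := hpre i j
        have : (ext C i j : ℤ) = ext D i j := by linarith
        exact_mod_cast this
      have hCD : C = D := by
        funext i j
        have := hext i.val j.val
        rwa [ext_apply, ext_apply] at this
      rw [hCD, sub_self]
      exact zero_mem _

end Main

lemma exists_list_of_mem_closure {M : Type*} [AddCommMonoid M] {s : Set M} {x : M}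
    (h : x ∈ AddSubmonoid.closure s) :
    ∃ L : List M, (∀ q ∈ L, q ∈ s) ∧ x = L.sum := by
  induction h using AddSubmonoid.closure_induction with
  | mem y hy => exact ⟨[y], by simp [hy], by simp⟩
  | zero => exact ⟨[], by simp, by simp⟩
  | add y z _ _ hy hz =>
    obtain ⟨L1, h1, e1⟩ := hy
    obtain ⟨L2, h2, e2⟩ := hz
    refine ⟨L1 ++ L2, ?_, by rw [List.sum_append, e1, e2]⟩
    intro q hq
    rcases List.mem_append.mp hq with h | h
    · exact h1 q h
    · exact h2 q h

lemma list_sum_eq_fin {M : Type*} [AddCommMonoid M] (L : List M) :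
    L.sum = ∑ t : Fin L.length, L.get t := by
  rw [← Fin.sum_univ_getElem]
  simp [List.get_eq_getElem]

end S17

theorem stmt17 (n : ℕ) (C D : Matrix (Fin n) (Fin n) ℕ)
    (hrow : ∀ i, ∑ j, C i j = ∑ j, D i j)
    (hcol : ∀ j, ∑ i, C i j = ∑ i, D i j)
    (hstar : ∀ i j, cstar D i j ≤ cstar C i j) :
    ∃ (N : ℕ) (ri ri' ci ci' : Fin N → Fin n) (e : Fin N → ((Fin n × Fin n) →₀ ℕ)),
      (∀ t, ri t < ri' t ∧ ci t < ci' t) ∧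
      (∏ p : Fin n × Fin n, (X p : MvPolynomial (Fin n × Fin n) ℤ) ^ C p.1 p.2) -
        (∏ p : Fin n × Fin n, (X p : MvPolynomial (Fin n × Fin n) ℤ) ^ D p.1 p.2) =
      ∑ t, (X (ri t, ci t) * X (ri' t, ci' t) - X (ri t, ci' t) * X (ri' t, ci t)) *
        monomial (e t) (1 : ℤ) := by
  classical
  have hrowE : ∀ i, ∑ b ∈ Finset.range n, S17.ext C i b = ∑ b ∈ Finset.range n, S17.ext D i b := by
    intro i
    rcases lt_or_ge i n with hi | hi
    · have hC : ∑ b ∈ Finset.range n, S17.ext C i b = ∑ j : Fin n, C ⟨i, hi⟩ j := by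
        rw [← Fin.sum_univ_eq_sum_range (fun b => S17.ext C i b) n]
        exact Finset.sum_congr rfl fun j _ => S17.ext_apply C ⟨i, hi⟩ j
      have hD : ∑ b ∈ Finset.range n, S17.ext D i b = ∑ j : Fin n, D ⟨i, hi⟩ j := by
        rw [← Fin.sum_univ_eq_sum_range (fun b => S17.ext D i b) n]
        exact Finset.sum_congr rfl fun j _ => S17.ext_apply D ⟨i, hi⟩ j
      rw [hC, hD]
      exact hrow ⟨i, hi⟩
    · rw [Finset.sum_eq_zero fun b _ => S17.ext_eq_zero_left C b hi,
        Finset.sum_eq_zero fun b _ => S17.ext_eq_zero_left D b hi]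
  have hcolE : ∀ b, ∑ i ∈ Finset.range n, S17.ext C i b = ∑ i ∈ Finset.range n, S17.ext D i b := by
    intro b
    rcases lt_or_ge b n with hb | hb
    · have hC : ∑ i ∈ Finset.range n, S17.ext C i b = ∑ i : Fin n, C i ⟨b, hb⟩ := by
        rw [← Fin.sum_univ_eq_sum_range (fun i => S17.ext C i b) n]
        exact Finset.sum_congr rfl fun i _ => S17.ext_apply C i ⟨b, hb⟩
      have hD : ∑ i ∈ Finset.range n, S17.ext D i b = ∑ i : Fin n, D i ⟨b, hb⟩ := by
        rw [← Fin.sum_univ_eq_sum_range (fun i => S17.ext D i b) n]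
        exact Finset.sum_congr rfl fun i _ => S17.ext_apply D i ⟨b, hb⟩
      rw [hC, hD]
      exact hcol ⟨b, hb⟩
    · rw [Finset.sum_eq_zero fun i _ => S17.ext_eq_zero_right C i hb,
        Finset.sum_eq_zero fun i _ => S17.ext_eq_zero_right D i hb]
  have hgrid : ∀ i j, i ≤ n → j ≤ n → 0 ≤ S17.fZ C D i j := by
    intro i j hi hj
    rcases i with _ | i
    · rw [S17.fZ_zero_left]
    rcases j with _ | j
    · rw [S17.fZ_zero_right]
    have hi' : i < n := by omega
    have hj' : j < n := by omega
    have h1 := S17.cstar_eq_pre C ⟨i, hi'⟩ ⟨j, hj'⟩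
    have h2 := S17.cstar_eq_pre D ⟨i, hi'⟩ ⟨j, hj'⟩
    have hs := hstar ⟨i, hi'⟩ ⟨j, hj'⟩
    unfold S17.fZ
    rw [show (⟨i, hi'⟩ : Fin n).val + 1 = i + 1 from rfl,
      show (⟨j, hj'⟩ : Fin n).val + 1 = j + 1 from rfl] at h1 h2
    rw [← h1, ← h2]
    omega
  have hf := S17.fZ_nonneg C D hrowE hcolE hgrid
  have hmem := S17.main
    (∑ i ∈ Finset.range (n+1), ∑ j ∈ Finset.range (n+1), S17.fZ C D i j).toNat
    C D hrowE hcolE hf le_rfl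
  obtain ⟨L, hLmem, hLsum⟩ := S17.exists_list_of_mem_closure hmem
  have hT : ∀ t : Fin L.length, ∃ (a a' b b' : Fin n) (e : (Fin n × Fin n) →₀ ℕ),
      a < a' ∧ b < b' ∧ L.get t =
        (X (a, b) * X (a', b') - X (a, b') * X (a', b)) * monomial e 1 :=
    fun t => hLmem (L.get t) (L.get_mem t)
  choose ri ri' ci ci' e h1 h2 h3 using hT
  refine ⟨L.length, ri, ri', ci, ci', e, fun t => ⟨h1 t, h2 t⟩, ?_⟩
  calc (∏ p : Fin n × Fin n, (X p : MvPolynomial (Fin n × Fin n) ℤ) ^ C p.1 p.2) -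
        (∏ p : Fin n × Fin n, (X p : MvPolynomial (Fin n × Fin n) ℤ) ^ D p.1 p.2)
      = S17.PM C - S17.PM D := rfl
    _ = L.sum := hLsum
    _ = ∑ t : Fin L.length, L.get t := S17.list_sum_eq_fin L
    _ = _ := Finset.sum_congr rfl fun t _ => h3 t
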